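/- A bounded linear operator A : H_1 → H_2 between Hilbert spaces is Fredholm if and only if the pair (H_1 × {0}, Graph(A)) is a Fredholm pair of closed subspaces in H_1 × H_2. -/

import Mathlib

noncomputable section

/-- Closed subspaces `V, W` of a (normed) space form a Fredholm pair if `V ∩ W` is
finite dimensional, `V + W` is closed, and `V + W` has finite codimension. -/
def IsFredholmPair {E : Type*} [NormedAddCommGroup E] [NormedSpace ℝ E]
    (V W : Submodule ℝ E) : Prop :=
  FiniteDimensional ℝ ↥(V ⊓ W) ∧ IsClosed ((V ⊔ W : Submodule ℝ E) : Set E) ∧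
    FiniteDimensional ℝ (E ⧸ (V ⊔ W))

/-- A bounded linear operator `A : H₁ → H₂` between Hilbert spaces is Fredholm
(finite-dimensional kernel, closed range, finite-dimensional cokernel) if and only if the
pair `(H₁ × {0}, Graph(A))` is a Fredholm pair of closed subspaces of `H₁ × H₂`. -/
theorem stmt_7 {H₁ H₂ : Type*}
    [NormedAddCommGroup H₁] [InnerProductSpace ℝ H₁] [CompleteSpace H₁]
    [NormedAddCommGroup H₂] [InnerProductSpace ℝ H₂] [CompleteSpace H₂]
    (A : H₁ →L[ℝ] H₂) :
    (FiniteDimensional ℝ (LinearMap.ker (A : H₁ →ₗ[ℝ] H₂)) ∧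
      IsClosed ((LinearMap.range (A : H₁ →ₗ[ℝ] H₂) : Submodule ℝ H₂) : Set H₂) ∧
      FiniteDimensional ℝ (H₂ ⧸ LinearMap.range (A : H₁ →ₗ[ℝ] H₂))) ↔
    IsFredholmPair ((⊤ : Submodule ℝ H₁).prod (⊥ : Submodule ℝ H₂))
      (LinearMap.graph (A : H₁ →ₗ[ℝ] H₂)) := by
  set A' : H₁ →ₗ[ℝ] H₂ := (A : H₁ →ₗ[ℝ] H₂) with hA'
  -- intersection
  have hinf : ((⊤ : Submodule ℝ H₁).prod (⊥ : Submodule ℝ H₂)) ⊓ LinearMap.graph A'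
      = (LinearMap.ker A').map (LinearMap.inl ℝ H₁ H₂) := by
    ext ⟨x, y⟩
    simp only [Submodule.mem_inf, Submodule.mem_prod, Submodule.mem_top, Submodule.mem_bot,
      true_and, LinearMap.mem_graph_iff, Submodule.mem_map, LinearMap.mem_ker,
      LinearMap.inl_apply, Prod.mk.injEq]
    constructor
    · rintro ⟨rfl, h⟩
      exact ⟨x, h.symm, rfl, rfl⟩
    · rintro ⟨z, hz, rfl, rfl⟩
      exact ⟨rfl, hz.symm⟩
  -- sum
  have hsup : ((⊤ : Submodule ℝ H₁).prod (⊥ : Submodule ℝ H₂)) ⊔ LinearMap.graph A'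
      = (⊤ : Submodule ℝ H₁).prod (LinearMap.range A') := by
    apply le_antisymm
    · apply sup_le
      · rintro ⟨x, y⟩ ⟨-, hy⟩
        simp only [Submodule.mem_bot] at hy
        subst hy
        exact ⟨trivial, 0, by simp⟩
      · rintro ⟨x, y⟩ hg
        rw [LinearMap.mem_graph_iff] at hg
        exact ⟨trivial, x, hg.symm⟩
    · rintro ⟨x, y⟩ ⟨-, hy⟩
      obtain ⟨z, rfl⟩ := hy
      refine Submodule.mem_sup.2 ⟨(x - z, 0), ⟨trivial, by simp⟩, (z, A' z), ?_, by simp⟩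
      rw [LinearMap.mem_graph_iff]
  -- equivalences
  have einf : (LinearMap.ker A') ≃ₗ[ℝ] ((LinearMap.ker A').map (LinearMap.inl ℝ H₁ H₂)) :=
    Submodule.equivMapOfInjective _ LinearMap.inl_injective _
  have hker : FiniteDimensional ℝ (LinearMap.ker A') ↔
      FiniteDimensional ℝ ((LinearMap.ker A').map (LinearMap.inl ℝ H₁ H₂)) :=
    ⟨fun h => Module.Finite.equiv einf, fun h => Module.Finite.equiv einf.symm⟩
  -- closedness
  have hclosed : IsClosed ((LinearMap.range A' : Submodule ℝ H₂) : Set H₂) ↔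
      IsClosed (((⊤ : Submodule ℝ H₁).prod (LinearMap.range A') : Submodule ℝ (H₁ × H₂)) : Set (H₁ × H₂)) := by
    have hset : (((⊤ : Submodule ℝ H₁).prod (LinearMap.range A') : Submodule ℝ (H₁ × H₂)) : Set (H₁ × H₂))
        = Set.univ ×ˢ (LinearMap.range A' : Set H₂) := by
      ext ⟨x, y⟩
      simp [Submodule.mem_prod]
    rw [hset]
    constructor
    · exact fun h => isClosed_univ.prod h
    · intro h
      have := h.preimage (Continuous.prodMk_right (0 : H₁))
      simpa using this
  -- quotient
  have hq : ∃ e : ((H₁ × H₂) ⧸ ((⊤ : Submodule ℝ H₁).prod (LinearMap.range A'))) ≃ₗ[ℝ]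
      (H₂ ⧸ LinearMap.range A'), True := by
    set q : (H₁ × H₂) →ₗ[ℝ] H₂ ⧸ LinearMap.range A' :=
      (Submodule.mkQ (LinearMap.range A')).comp (LinearMap.snd ℝ H₁ H₂) with hqdef
    have hsurj : Function.Surjective q := by
      intro z
      obtain ⟨y, rfl⟩ := Submodule.mkQ_surjective _ z
      exact ⟨(0, y), rfl⟩
    have hkq : LinearMap.ker q = (⊤ : Submodule ℝ H₁).prod (LinearMap.range A') := by
      ext ⟨x, y⟩
      simp [hqdef, Submodule.mem_prod, Submodule.Quotient.mk_eq_zero]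
    exact ⟨(Submodule.quotEquivOfEq _ _ hkq.symm).trans (q.quotKerEquivOfSurjective hsurj), trivial⟩
  obtain ⟨eq, -⟩ := hq
  have hcoker : FiniteDimensional ℝ (H₂ ⧸ LinearMap.range A') ↔
      FiniteDimensional ℝ ((H₁ × H₂) ⧸ ((⊤ : Submodule ℝ H₁).prod (LinearMap.range A'))) :=
    ⟨fun h => Module.Finite.equiv eq.symm, fun h => Module.Finite.equiv eq⟩
  unfold IsFredholmPair
  rw [hinf, hsup]
  exact and_congr hker (and_congr hclosed hcoker)
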